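/- arXiv:2305.06112 — 7 statements merged into one kernel-verified Lean document; each statement's English description precedes it below -/
import Mathlib

section
/- In a Markov category C, Bayesian inverses are almost-surely unique: if g : Y → X and g' : Y → X are both Bayesian inverses of f : X → Y at the state p : I → X, then g and g' are (f ∘ p)-almost-surely equal, i.e. g ≐_{f∘p} g'. -/
open CategoryTheory MonoidalCategory

universe v u

/-- A Markov category: a symmetric monoidal category equipped with a commutative
comonoid structure (copy, discard) on every object, compatible with the monoidal
structure, with discarding natural. -/
class MarkovCategory (C : Type u) [Category.{v} C] [MonoidalCategory C]
    [SymmetricCategory C] where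
  copy : ∀ X : C, X ⟶ X ⊗ X
  del : ∀ X : C, X ⟶ 𝟙_ C
  copy_del_left : ∀ X : C, copy X ≫ (del X ▷ X) = (λ_ X).inv
  copy_del_right : ∀ X : C, copy X ≫ (X ◁ del X) = (ρ_ X).inv
  copy_assoc : ∀ X : C, copy X ≫ (copy X ▷ X) ≫ (α_ X X X).hom = copy X ≫ (X ◁ copy X)
  copy_comm : ∀ X : C, copy X ≫ (β_ X X).hom = copy X
  copy_tensor : ∀ X Y : C, copy (X ⊗ Y) = (copy X ⊗ₘ copy Y) ≫ tensorμ X X Y Y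
  copy_unit : copy (𝟙_ C) = (λ_ (𝟙_ C)).inv
  del_unit : del (𝟙_ C) = 𝟙 (𝟙_ C)
  del_natural : ∀ {X Y : C} (f : X ⟶ Y), f ≫ del Y = del X

namespace MarkovCategory

variable {C : Type u} [Category.{v} C] [MonoidalCategory C] [SymmetricCategory C]
  [_root_.MarkovCategory C]

/-- `f` and `g` are `p`-almost-surely equal: `(id_X ⊗ f) ∘ ∇_X ∘ p = (id_X ⊗ g) ∘ ∇_X ∘ p`. -/
def AEEq {X Y : C} (p : 𝟙_ C ⟶ X) (f g : X ⟶ Y) : Prop :=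
  p ≫ copy X ≫ (X ◁ f) = p ≫ copy X ≫ (X ◁ g)

/-- `f'` is a Bayesian inverse of `f : X ⟶ Y` at the state `p : I ⟶ X`:
`(f' ⊗ id_Y) ∘ ∇_Y ∘ f ∘ p = (id_X ⊗ f) ∘ ∇_X ∘ p`. -/
def BayesianInverse {X Y : C} (f : X ⟶ Y) (p : 𝟙_ C ⟶ X) (f' : Y ⟶ X) : Prop :=
  p ≫ f ≫ copy Y ≫ (f' ▷ Y) = p ≫ copy X ≫ (X ◁ f)

/-- `(Xp, i, r)` is a support of the state `p : I ⟶ X`. -/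
def IsSupport {X : C} (p : 𝟙_ C ⟶ X) (Xp : C) (i : Xp ⟶ X) (r : X ⟶ Xp) : Prop :=
  i ≫ r = 𝟙 Xp ∧ ∀ (Y : C) (f g : X ⟶ Y), AEEq p f g ↔ i ≫ f = i ≫ g

end MarkovCategory

open MarkovCategory in
/-- Bayesian inverses are almost-surely unique. -/
theorem bayesianInverse_aeEq_unique {C : Type u} [Category.{v} C] [MonoidalCategory C]
    [SymmetricCategory C] [_root_.MarkovCategory C] {X Y : C} (f : X ⟶ Y) (p : 𝟙_ C ⟶ X)
    (g g' : Y ⟶ X) (hg : BayesianInverse f p g) (hg' : BayesianInverse f p g') :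
    AEEq (p ≫ f) g g' := by
  have key : ∀ h : Y ⟶ X, copy Y ≫ (Y ◁ h) = (copy Y ≫ (h ▷ Y)) ≫ (β_ X Y).hom := by
    intro h
    rw [Category.assoc, BraidedCategory.braiding_naturality_left, ← Category.assoc,
      copy_comm]
  have h := hg.trans hg'.symm
  unfold AEEq
  simp only [Category.assoc, key, ← Category.assoc]
  simp only [Category.assoc]
  exact (reassoc_of% h) _
end

section
/- Chain rule for Bayesian updating: in a Markov category C, let f : X → Y and g : Y → Z be morphisms and p : I → X a state. If f' : Y → X is a Bayesian inverse of f at p, and g' : Z → Y is a Bayesian inverse of g at the pushforward state f ∘ p, then the composite f' ∘ g' : Z → X is a Bayesian inverse of g ∘ f at p. -/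
open CategoryTheory MonoidalCategory

universe v u

open MarkovCategory in
/-- Chain rule for Bayesian updating. -/
theorem bayesianInverse_comp {C : Type u} [Category.{v} C] [MonoidalCategory C]
    [SymmetricCategory C] [_root_.MarkovCategory C] {X Y Z : C} (f : X ⟶ Y) (g : Y ⟶ Z)
    (p : 𝟙_ C ⟶ X) (f' : Y ⟶ X) (g' : Z ⟶ Y)
    (hf : BayesianInverse f p f') (hg : BayesianInverse g (p ≫ f) g') :
    BayesianInverse (f ≫ g) p (g' ≫ f') := by
  unfold BayesianInverse at *
  calc p ≫ (f ≫ g) ≫ copy Z ≫ ((g' ≫ f') ▷ Z)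
      = ((p ≫ f) ≫ g ≫ copy Z ≫ (g' ▷ Z)) ≫ (f' ▷ Z) := by
        simp [MonoidalCategory.comp_whiskerRight]
    _ = ((p ≫ f) ≫ copy Y ≫ (Y ◁ g)) ≫ (f' ▷ Z) := by rw [hg]
    _ = p ≫ f ≫ copy Y ≫ (f' ▷ Y) ≫ (X ◁ g) := by
        simp [MonoidalCategory.whisker_exchange]
    _ = p ≫ copy X ≫ (X ◁ f) ≫ (X ◁ g) := by
        have := hf
        simp only [← Category.assoc] at this ⊢
        rw [this]
    _ = p ≫ copy X ≫ (X ◁ (f ≫ g)) := by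
        simp [MonoidalCategory.whiskerLeft_comp]
end

section
/- Bayesian inversion is almost-surely functorial: in a Markov category C, let f : X → Y and g : Y → Z be morphisms and p : I → X a state. If f' : Y → X is a Bayesian inverse of f at p, g' : Z → Y is a Bayesian inverse of g at f ∘ p, and h : Z → X is any Bayesian inverse of g ∘ f at p, then h ≐_{g∘f∘p} f' ∘ g'. -/
open CategoryTheory MonoidalCategory

universe v u

open _root_.MarkovCategory in
/-- Bayesian inversion is almost-surely functorial. -/
theorem bayesianInverse_almost_functorial {C : Type u} [Category.{v} C] [MonoidalCategory C]
    [SymmetricCategory C] [_root_.MarkovCategory C] {X Y Z : C} (f : X ⟶ Y) (g : Y ⟶ Z)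
    (p : 𝟙_ C ⟶ X) (f' : Y ⟶ X) (g' : Z ⟶ Y) (h : Z ⟶ X)
    (hf : BayesianInverse f p f') (hg : BayesianInverse g (p ≫ f) g')
    (hh : BayesianInverse (f ≫ g) p h) :
    AEEq (p ≫ f ≫ g) h (g' ≫ f') := by
  unfold AEEq BayesianInverse at *
  have swap : ∀ {W : C} (k : Z ⟶ W), copy Z ≫ (Z ◁ k) = copy Z ≫ (k ▷ Z) ≫ (β_ W Z).hom := by
    intro W k
    conv_lhs => rw [← copy_comm Z]
    rw [Category.assoc, ← BraidedCategory.braiding_naturality_left]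
  simp only [Category.assoc, MonoidalCategory.whiskerLeft_comp,
    MonoidalCategory.comp_whiskerRight] at hf hg hh ⊢
  rw [swap h, reassoc_of% swap g', ← BraidedCategory.braiding_naturality_left]
  have hh2 := congrArg (fun t => t ≫ (β_ X Z).hom) hh
  simp only [Category.assoc] at hh2
  rw [hh2, reassoc_of% hg, whisker_exchange_assoc, reassoc_of% hf]
end

section
/- Strict compositionality of Bayesian inverses with support: in a Markov category C, let f : X → Y, g : Y → Z, and p : I → X be given, with supports (X_p, i_X, r_X) of p, (Y_{f∘p}, i_Y, r_Y) of f ∘ p, and (Z_{g∘f∘p}, i_Z, r_Z) of g ∘ f ∘ p. If f♯ : Y_{f∘p} → X_p is such that i_X ∘ f♯ ∘ r_Y is a Bayesian inverse of f at p, and g♯ : Z_{g∘f∘p} → Y_{f∘p} is such that i_Y ∘ g♯ ∘ r_Z is a Bayesian inverse of g at f ∘ p, then i_X ∘ (f♯ ∘ g♯) ∘ r_Z is a Bayesian inverse of g ∘ f at p; moreover f♯ ∘ g♯ is the unique morphism Z_{g∘f∘p} → X_p with this property. -/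
open CategoryTheory MonoidalCategory

universe v u

open MarkovCategory in
/-- Strict compositionality of Bayesian inverses with support. -/
theorem bayesianInverse_with_support_comp {C : Type u} [Category.{v} C] [MonoidalCategory C]
    [SymmetricCategory C] [_root_.MarkovCategory C] {X Y Z : C} (f : X ⟶ Y) (g : Y ⟶ Z)
    (p : 𝟙_ C ⟶ X)
    (Xp : C) (iX : Xp ⟶ X) (rX : X ⟶ Xp) (hXp : IsSupport p Xp iX rX)
    (Yfp : C) (iY : Yfp ⟶ Y) (rY : Y ⟶ Yfp) (hYfp : IsSupport (p ≫ f) Yfp iY rY)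
    (Zgfp : C) (iZ : Zgfp ⟶ Z) (rZ : Z ⟶ Zgfp) (hZgfp : IsSupport (p ≫ f ≫ g) Zgfp iZ rZ)
    (fs : Yfp ⟶ Xp) (hfs : BayesianInverse f p (rY ≫ fs ≫ iX))
    (gs : Zgfp ⟶ Yfp) (hgs : BayesianInverse g (p ≫ f) (rZ ≫ gs ≫ iY)) :
    BayesianInverse (f ≫ g) p (rZ ≫ (gs ≫ fs) ≫ iX) ∧
      ∀ h : Zgfp ⟶ Xp, BayesianInverse (f ≫ g) p (rZ ≫ h ≫ iX) → h = gs ≫ fs := by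
  obtain ⟨hiX, hXsup⟩ := hXp
  obtain ⟨hiY, hYsup⟩ := hYfp
  obtain ⟨hiZ, hZsup⟩ := hZgfp
  have key : BayesianInverse (f ≫ g) p (rZ ≫ (gs ≫ fs) ≫ iX) := by
    unfold BayesianInverse at hfs hgs ⊢
    have hcomp : rZ ≫ (gs ≫ fs) ≫ iX = (rZ ≫ gs ≫ iY) ≫ (rY ≫ fs ≫ iX) := by
      simp [reassoc_of% hiY]
    rw [hcomp, comp_whiskerRight, MonoidalCategory.whiskerLeft_comp]
    simp only [Category.assoc]
    rw [reassoc_of% hgs, whisker_exchange, reassoc_of% hfs]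
  refine ⟨key, fun h hh => ?_⟩
  have swap : ∀ (u : Z ⟶ X), copy Z ≫ (Z ◁ u) = copy Z ≫ u ▷ Z ≫ (β_ X Z).hom := by
    intro u
    conv_lhs => rw [← copy_comm Z, Category.assoc,
      ← BraidedCategory.braiding_naturality_left]
  have hae : AEEq (p ≫ f ≫ g) (rZ ≫ h ≫ iX) (rZ ≫ (gs ≫ fs) ≫ iX) := by
    unfold BayesianInverse at hh key
    have e : p ≫ (f ≫ g) ≫ copy Z ≫ (rZ ≫ h ≫ iX) ▷ Z
        = p ≫ (f ≫ g) ≫ copy Z ≫ (rZ ≫ (gs ≫ fs) ≫ iX) ▷ Z := hh.trans key.symm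
    unfold AEEq
    rw [swap, swap]
    simp only [Category.assoc] at e ⊢
    rw [reassoc_of% e]
  rw [hZsup _ _ _] at hae
  simp only [Category.assoc] at hae
  rw [reassoc_of% hiZ] at hae
  rw [reassoc_of% hiZ] at hae
  calc h = (h ≫ iX) ≫ rX := by rw [Category.assoc, hiX, Category.comp_id]
    _ = gs ≫ fs := by rw [hae]; simp [hiX]
end

section
/- In a Markov category C, let p : I → X be a state and suppose an object X_p represents the functor C → Set sending Y to the quotient C(X, Y)/≐_p of the hom-set by p-almost-sure equality (with functorial action induced by postcomposition). Then there exist morphisms i : X_p → X and r : X → X_p such that r ∘ i = id_{X_p} and, for all objects Y and all f, g : X → Y, f ≐_p g if and only if f ∘ i = g ∘ i. -/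
open CategoryTheory MonoidalCategory

universe v u

namespace MarkovCategory

variable {C : Type u} [Category.{v} C] [MonoidalCategory C] [SymmetricCategory C]
  [_root_.MarkovCategory C]

theorem AEEq.postcomp {X Y Z : C} {p : 𝟙_ C ⟶ X} {f g : X ⟶ Y} (hfg : AEEq p f g)
    (k : Y ⟶ Z) : AEEq p (f ≫ k) (g ≫ k) := by
  have := congrArg (fun m => m ≫ (X ◁ k)) hfg
  simpa [AEEq, MonoidalCategory.whiskerLeft_comp] using this

/-- The functor `Y ↦ C(X, Y)/≐ₚ` sending an object to the quotient of the hom-set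
by `p`-almost-sure equality, with functorial action induced by postcomposition. -/
def aeQuotFunctor {X : C} (p : 𝟙_ C ⟶ X) : C ⥤ Type v where
  obj Y := Quot (fun f g : X ⟶ Y => AEEq p f g)
  map {Y Z} k := TypeCat.ofHom (Quot.map (fun f => f ≫ k) (fun f g hfg => hfg.postcomp k))
  map_id Y := by
    ext q
    induction q using Quot.ind with
    | _ f => simp [Quot.map]
  map_comp {Y Z W} k l := by
    ext q
    induction q using Quot.ind with
    | _ f => simp [Quot.map]

end MarkovCategory

open MarkovCategory in
/-- A representing object of the quotient functor `Y ↦ C(X, Y)/≐ₚ` admits a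
section-retraction pair exhibiting it as a support of `p`. -/
theorem support_of_representation {C : Type u} [Category.{v} C] [MonoidalCategory C]
    [SymmetricCategory C] [_root_.MarkovCategory C] {X : C} (p : 𝟙_ C ⟶ X) (Xp : C)
    (e : coyoneda.obj (Opposite.op Xp) ≅ aeQuotFunctor p) :
    ∃ (i : Xp ⟶ X) (r : X ⟶ Xp), IsSupport p Xp i r := by
  classical
  set i : Xp ⟶ X := e.inv.app X (Quot.mk (fun f g : X ⟶ X => AEEq p f g) (𝟙 X) : (aeQuotFunctor p).obj X) with hi
  have hinv : ∀ {Y : C} (k : X ⟶ Y), e.inv.app Y (Quot.mk (fun f g : X ⟶ Y => AEEq p f g) k : (aeQuotFunctor p).obj Y) = i ≫ k := by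
    intro Y k
    have h := ConcreteCategory.congr_hom (e.inv.naturality k) (Quot.mk (fun f g : X ⟶ X => AEEq p f g) (𝟙 X) : (aeQuotFunctor p).obj X)
    simp only [aeQuotFunctor, coyoneda, types_comp_apply, ConcreteCategory.comp_apply, TypeCat.ofHom_apply, Quot.map] at h
    have h' : e.inv.app Y (Quot.mk (fun f g : X ⟶ Y => AEEq p f g) (𝟙 X ≫ k) : (aeQuotFunctor p).obj Y) = i ≫ k := h
    simpa using h'
  have hinj : ∀ Y : C, Function.Injective (e.inv.app Y) := by
    intro Y
    exact Function.LeftInverse.injective (g := e.hom.app Y)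
      (fun q => ConcreteCategory.congr_hom (e.inv_hom_id_app Y) q)
  have hequiv : ∀ Y : C, Equivalence (fun f g : X ⟶ Y => AEEq p f g) :=
    fun Y => ⟨fun f => rfl, Eq.symm, Eq.trans⟩
  obtain ⟨r, hr⟩ := Quot.exists_rep (show Quot (fun f g : X ⟶ Xp => AEEq p f g) from e.hom.app Xp (𝟙 Xp))
  refine ⟨i, r, ?_, ?_⟩
  · have : e.inv.app Xp (Quot.mk (fun f g : X ⟶ Xp => AEEq p f g) r : (aeQuotFunctor p).obj Xp) = i ≫ r := hinv r
    rw [hr] at this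
    have h2 : e.inv.app Xp (e.hom.app Xp (𝟙 Xp)) = 𝟙 Xp :=
      ConcreteCategory.congr_hom (e.hom_inv_id_app Xp) (𝟙 Xp)
    rw [h2] at this
    exact this.symm
  · intro Y f g
    constructor
    · intro h
      have : Quot.mk (fun f g : X ⟶ Y => AEEq p f g) f = Quot.mk _ g := Quot.sound h
      calc i ≫ f = e.inv.app Y (Quot.mk (fun f g : X ⟶ Y => AEEq p f g) f : (aeQuotFunctor p).obj Y) := (hinv f).symm
        _ = e.inv.app Y (Quot.mk (fun f g : X ⟶ Y => AEEq p f g) g : (aeQuotFunctor p).obj Y) := by rw [this]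
        _ = i ≫ g := hinv g
    · intro h
      have : Quot.mk (fun f g : X ⟶ Y => AEEq p f g) f = Quot.mk _ g := by
        apply hinj Y
        rw [hinv f, hinv g, h]
      exact (hequiv Y).eqvGen_iff.mp (Quot.eqvGen_exact this)
end

section
/- Support objects are unique up to isomorphism: in a Markov category C, if (X_p, i, r) and (X'_p, i', r') are both supports of the same state p : I → X, then r' ∘ i : X_p → X'_p and r ∘ i' : X'_p → X_p are mutually inverse isomorphisms. -/
open CategoryTheory MonoidalCategory

universe v u

/-- A Markov category: a symmetric monoidal category equipped with a commutative
comonoid structure (copy, discard) on every object, compatible with the monoidal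
structure, with discarding natural. -/
class MarkovCategory' (C : Type u) [Category.{v} C] [MonoidalCategory C]
    [SymmetricCategory C] where
  copy : ∀ X : C, X ⟶ X ⊗ X
  del : ∀ X : C, X ⟶ 𝟙_ C
  copy_del_left : ∀ X : C, copy X ≫ (del X ▷ X) = (λ_ X).inv
  copy_del_right : ∀ X : C, copy X ≫ (X ◁ del X) = (ρ_ X).inv
  copy_assoc : ∀ X : C, copy X ≫ (copy X ▷ X) ≫ (α_ X X X).hom = copy X ≫ (X ◁ copy X)
  copy_comm : ∀ X : C, copy X ≫ (β_ X X).hom = copy X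
  copy_tensor : ∀ X Y : C, copy (X ⊗ Y) = (copy X ⊗ₘ copy Y) ≫ tensorμ X X Y Y
  copy_unit : copy (𝟙_ C) = (λ_ (𝟙_ C)).inv
  del_unit : del (𝟙_ C) = 𝟙 (𝟙_ C)
  del_natural : ∀ {X Y : C} (f : X ⟶ Y), f ≫ del Y = del X

namespace MarkovCategory'

variable {C : Type u} [Category.{v} C] [MonoidalCategory C] [SymmetricCategory C]
  [MarkovCategory' C]

/-- `f` and `g` are `p`-almost-surely equal: `(id_X ⊗ f) ∘ ∇_X ∘ p = (id_X ⊗ g) ∘ ∇_X ∘ p`. -/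
def AEEq {X Y : C} (p : 𝟙_ C ⟶ X) (f g : X ⟶ Y) : Prop :=
  p ≫ copy X ≫ (X ◁ f) = p ≫ copy X ≫ (X ◁ g)

/-- `f'` is a Bayesian inverse of `f : X ⟶ Y` at the state `p : I ⟶ X`:
`(f' ⊗ id_Y) ∘ ∇_Y ∘ f ∘ p = (id_X ⊗ f) ∘ ∇_X ∘ p`. -/
def BayesianInverse {X Y : C} (f : X ⟶ Y) (p : 𝟙_ C ⟶ X) (f' : Y ⟶ X) : Prop :=
  p ≫ f ≫ copy Y ≫ (f' ▷ Y) = p ≫ copy X ≫ (X ◁ f)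

/-- `(Xp, i, r)` is a support of the state `p : I ⟶ X`. -/
def IsSupport {X : C} (p : 𝟙_ C ⟶ X) (Xp : C) (i : Xp ⟶ X) (r : X ⟶ Xp) : Prop :=
  i ≫ r = 𝟙 Xp ∧ ∀ (Y : C) (f g : X ⟶ Y), AEEq p f g ↔ i ≫ f = i ≫ g

end MarkovCategory'

open MarkovCategory' in
/-- Support objects are unique up to isomorphism. -/
theorem support_unique_up_to_iso {C : Type u} [Category.{v} C] [MonoidalCategory C]
    [SymmetricCategory C] [MarkovCategory' C] {X : C} (p : 𝟙_ C ⟶ X)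
    (Xp : C) (i : Xp ⟶ X) (r : X ⟶ Xp) (h : IsSupport p Xp i r)
    (Xp' : C) (i' : Xp' ⟶ X) (r' : X ⟶ Xp') (h' : IsSupport p Xp' i' r') :
    (i ≫ r') ≫ (i' ≫ r) = 𝟙 Xp ∧ (i' ≫ r) ≫ (i ≫ r') = 𝟙 Xp' := by
  obtain ⟨hir, hsup⟩ := h
  obtain ⟨hir', hsup'⟩ := h'
  have h1 : AEEq p (𝟙 X) (r' ≫ i') := by
    rw [hsup']
    simp [reassoc_of% hir']
  have h2 : AEEq p (𝟙 X) (r ≫ i) := by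
    rw [hsup]
    simp [reassoc_of% hir]
  have e1 : i ≫ 𝟙 X = i ≫ (r' ≫ i') := (hsup _ _ _).mp h1
  have e2 : i' ≫ 𝟙 X = i' ≫ (r ≫ i) := (hsup' _ _ _).mp h2
  constructor
  · calc (i ≫ r') ≫ (i' ≫ r) = (i ≫ (r' ≫ i')) ≫ r := by simp
    _ = i ≫ r := by rw [← e1]; simp
    _ = 𝟙 Xp := hir
  · calc (i' ≫ r) ≫ (i ≫ r') = (i' ≫ (r ≫ i)) ≫ r' := by simp
    _ = i' ≫ r' := by rw [← e2]; simp
    _ = 𝟙 Xp' := hir'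
end

section
/- Restricting an ordinary Bayesian inverse yields a Bayesian inverse with support: in a Markov category C, fix f : X → Y and a state p : I → X, with supports (X_p, i_X, r_X) of p and (Y_{f∘p}, i_Y, r_Y) of f ∘ p. If h : Y → X is a Bayesian inverse of f at p, then i_X ∘ (r_X ∘ h ∘ i_Y) ∘ r_Y : Y → X is again a Bayesian inverse of f at p; that is, r_X ∘ h ∘ i_Y : Y_{f∘p} → X_p is a Bayesian inverse with support of f at p. -/
open CategoryTheory MonoidalCategory

universe v u

open MarkovCategory in
theorem whisker_swap {C : Type u} [Category.{v} C] [MonoidalCategory C]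
    [SymmetricCategory C] [_root_.MarkovCategory C] {Z W : C} (s : 𝟙_ C ⟶ Z) (a b : Z ⟶ W)
    (hab : AEEq s a b) :
    s ≫ copy Z ≫ (a ▷ Z) = s ≫ copy Z ≫ (b ▷ Z) := by
  have key : ∀ c : Z ⟶ W, copy Z ≫ (c ▷ Z) = copy Z ≫ (Z ◁ c) ≫ (β_ Z W).hom := by
    intro c
    rw [BraidedCategory.braiding_naturality_right, ← Category.assoc, copy_comm]
  rw [key, key, ← Category.assoc, ← Category.assoc, ← Category.assoc, ← Category.assoc]
  congr 1
  simpa [Category.assoc, AEEq] using hab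

open MarkovCategory in
/-- Restricting an ordinary Bayesian inverse yields a Bayesian inverse with support. -/
theorem restrict_bayesianInverse {C : Type u} [Category.{v} C] [MonoidalCategory C]
    [SymmetricCategory C] [_root_.MarkovCategory C] {X Y : C} (f : X ⟶ Y) (p : 𝟙_ C ⟶ X)
    (Xp : C) (iX : Xp ⟶ X) (rX : X ⟶ Xp) (hXp : IsSupport p Xp iX rX)
    (Yfp : C) (iY : Yfp ⟶ Y) (rY : Y ⟶ Yfp) (hYfp : IsSupport (p ≫ f) Yfp iY rY)
    (h : Y ⟶ X) (hh : BayesianInverse f p h) :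
    BayesianInverse f p (rY ≫ (iY ≫ h ≫ rX) ≫ iX) := by
  obtain ⟨hiXrX, hsuppX⟩ := hXp
  obtain ⟨hiYrY, hsuppY⟩ := hYfp
  set g : X ⟶ X := rX ≫ iX with hgdef
  have hg : AEEq p g (𝟙 X) := by
    rw [hsuppX]
    simp [hgdef, reassoc_of% hiXrX]
  have hgr : p ≫ copy X ≫ (g ▷ X) = p ≫ copy X := by
    have := whisker_swap p g (𝟙 X) hg
    simpa using this
  have hk : AEEq (p ≫ f) (rY ≫ (iY ≫ h ≫ rX) ≫ iX) (h ≫ g) := by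
    rw [hsuppY]
    simp [hgdef, reassoc_of% hiYrY]
  have step1 := whisker_swap (p ≫ f) _ _ hk
  unfold BayesianInverse
  rw [← Category.assoc p f, step1]
  have : (p ≫ f) ≫ copy Y ≫ ((h ≫ g) ▷ Y)
      = p ≫ f ≫ copy Y ≫ (h ▷ Y) ≫ (g ▷ Y) := by
    simp [MonoidalCategory.comp_whiskerRight]
  have hh' : p ≫ f ≫ copy Y ≫ (h ▷ Y) = p ≫ copy X ≫ (X ◁ f) := hh
  have e1 : p ≫ f ≫ copy Y ≫ h ▷ Y ≫ g ▷ Y = (p ≫ f ≫ copy Y ≫ h ▷ Y) ≫ g ▷ Y := by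
    simp
  rw [this, e1, hh']
  have exch : (X ◁ f) ≫ (g ▷ Y) = (g ▷ X) ≫ (X ◁ f) := by
    simp [MonoidalCategory.whisker_exchange]
  simp only [Category.assoc, exch]
  rw [reassoc_of% hgr]
end
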